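/- Let e ≥ 2, let w ∈ {3,4}, and let B be a block of e-weight w forming a [w:k]-pair (k ≥ 1) via the residue j carried by runner i. If a partition σ lying in B is exceptional for this pair (i.e., ε_j(σ) ≥ k+1), then |σ(i)| ≥ k+1; that is, the sum of the e-weights of the beads on runner i of the abacus display of σ is at least k+1. -/

import Mathlib

/-- A partition: a weakly decreasing function `parts : ℕ → ℕ` (0-indexed),
having exactly `len` nonzero parts. -/
structure AbacusPartition where
  parts : ℕ → ℕ
  antitone : Antitone parts
  len : ℕ
  pos_of_lt : ∀ i, i < len → 0 < parts i
  zero_of_ge : ∀ i, len ≤ i → parts i = 0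

/-- The beta-set (abacus display) of a partition with `r` beads:
positions `λ_i + r - i` for `1 ≤ i ≤ r` (0-indexed: `parts i + (r - 1 - i)`). -/
def AbacusPartition.betaSet (lam : AbacusPartition) (r : ℕ) : Finset ℕ :=
  (Finset.range r).image (fun i => lam.parts i + (r - 1 - i))

/-- e-weight of the bead at position `p` of the display `B`: the number of
unoccupied positions `q < p` with `q ≡ p (mod e)`. -/
def beadWeight (e : ℕ) (B : Finset ℕ) (p : ℕ) : ℕ :=
  ((Finset.range p).filter (fun q => q % e = p % e ∧ q ∉ B)).card

/-- Total e-weight of the display `B`. -/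
def abacusWeight (e : ℕ) (B : Finset ℕ) : ℕ :=
  B.sum (fun p => beadWeight e B p)

/-- e-weight of a partition (computed from the display with `lam.len` beads). -/
def eWeight (e : ℕ) (lam : AbacusPartition) : ℕ :=
  abacusWeight e (lam.betaSet lam.len)

/-- Positions on runner `res` (positions `p` with `p % e = res`), in increasing
order, up to a bound strictly beyond every bead. -/
def posList (e : ℕ) (B : Finset ℕ) (res : ℕ) : List ℕ :=
  (List.range (B.sup id + e + 2)).filter (fun p => p % e == res)

/-- One step of the signature-reduction automaton; the state is
`(list of surviving '+' positions, stack of pending '−' positions)`.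
A '−' occurs at `p` when `p` is occupied and its preceding position unoccupied
(position `-1` counts as occupied); a '+' occurs at `p` when `p` is unoccupied
and its preceding position occupied.  A '+' cancels the most recent pending '−'. -/
def signStep (B : Finset ℕ) (st : List ℕ × List ℕ) (p : ℕ) : List ℕ × List ℕ :=
  if p ∈ B ∧ ¬(p = 0 ∨ p - 1 ∈ B) then (st.1, p :: st.2)
  else if p ∉ B ∧ (p = 0 ∨ p - 1 ∈ B) then
    (match st.2 with
     | [] => (p :: st.1, ([] : List ℕ))
     | _ :: tl => (st.1, tl))
  else st

/-- Final state of the reduction of the `j`-signature on runner `res`: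
`(surviving '+' (conormal) positions, surviving '−' (normal) positions)`,
each list in decreasing order of position. -/
def signState (e : ℕ) (B : Finset ℕ) (res : ℕ) : List ℕ × List ℕ :=
  (posList e B res).foldl (signStep B) ([], [])

/-- Positions of the normal beads on runner `res`, in decreasing order. -/
def normalList (e : ℕ) (B : Finset ℕ) (res : ℕ) : List ℕ := (signState e B res).2

/-- The conormal positions on runner `res`, in decreasing order. -/
def conormalList (e : ℕ) (B : Finset ℕ) (res : ℕ) : List ℕ := (signState e B res).1

/-- ε: the number of normal beads on runner `res`. -/
def epsB (e : ℕ) (B : Finset ℕ) (res : ℕ) : ℕ := (normalList e B res).length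

/-- φ: the number of conormal positions on runner `res`. -/
def phiB (e : ℕ) (B : Finset ℕ) (res : ℕ) : ℕ := (conormalList e B res).length

/-- ε_j of a partition: in the display with `lam.len` beads, residue `j`
is carried by runner `(j + lam.len) % e`. -/
def epsP (e : ℕ) (lam : AbacusPartition) (j : ℕ) : ℕ :=
  epsB e (lam.betaSet lam.len) ((j + lam.len) % e)

/-- φ_j of a partition. -/
def phiP (e : ℕ) (lam : AbacusPartition) (j : ℕ) : ℕ :=
  phiB e (lam.betaSet lam.len) ((j + lam.len) % e)

/-- Move each bead in `ps` from its position `p` to `p - 1`. -/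
def moveDown (B : Finset ℕ) (ps : List ℕ) : Finset ℕ :=
  ps.foldl (fun C p => insert (p - 1) (C.erase p)) B

/-- For each position `p` in `ps`, move the bead at `p - 1` to `p`. -/
def moveUp (B : Finset ℕ) (ps : List ℕ) : Finset ℕ :=
  ps.foldl (fun C p => insert p (C.erase (p - 1))) B

/-- Ẽ^t on displays: move the `t` normal beads at the smallest positions down. -/
def Etil (e : ℕ) (B : Finset ℕ) (res t : ℕ) : Finset ℕ :=
  moveDown B ((normalList e B res).reverse.take t)

/-- F̃^t on displays: for the `t` largest conormal positions `p`,
move the bead at `p - 1` to `p`. -/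
def Ftil (e : ℕ) (B : Finset ℕ) (res t : ℕ) : Finset ℕ :=
  moveUp B ((conormalList e B res).take t)

/-- Number of beads of `B` on runner `i`. -/
def runnerCount (e : ℕ) (B : Finset ℕ) (i : ℕ) : ℕ :=
  (B.filter (fun p => p % e = i)).card

/-- Sum of the e-weights of the beads of `B` on runner `i` (this is `|λ(i)|`). -/
def runnerWeight (e : ℕ) (B : Finset ℕ) (i : ℕ) : ℕ :=
  (B.filter (fun p => p % e = i)).sum (beadWeight e B)

/-- The display of the e-core: slide every bead as far up its runner as possible. -/
def coreBeta (e : ℕ) (B : Finset ℕ) : Finset ℕ :=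
  (Finset.range e).biUnion
    (fun i => (Finset.range (runnerCount e B i)).image (fun m => i + m * e))

/-- `lam` lies in the block with bead counts `bd 0, …, bd (e-1)` and e-weight `w`:
displayed with `r = bd 0 + ⋯ + bd (e-1)` beads it has `bd i` beads on runner `i`
and e-weight `w`. -/
def inBlock (e : ℕ) (bd : ℕ → ℕ) (w : ℕ) (lam : AbacusPartition) : Prop :=
  lam.len ≤ (Finset.range e).sum bd ∧
  (∀ i < e, runnerCount e (lam.betaSet ((Finset.range e).sum bd)) i = bd i) ∧
  abacusWeight e (lam.betaSet ((Finset.range e).sum bd)) = w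

/-- The single-runner beta-set of the partition with parts `ρ` and `c` beads. -/
def oneRunnerBeta (rho : List ℕ) (c : ℕ) : Finset ℕ :=
  (Finset.range c).image (fun t => rho.getD t 0 + (c - 1 - t))

/-- The display of the partition `⟨0_{lamOf 0}, …, (e−1)_{lamOf (e−1)} | bd 0, …, bd (e−1)⟩`. -/
def display (e : ℕ) (bd : ℕ → ℕ) (lamOf : ℕ → List ℕ) : Finset ℕ :=
  (Finset.range e).biUnion
    (fun i => (oneRunnerBeta (lamOf i) (bd i)).image (fun m => i + m * e))

/-- The operator Ḟ at runner `res`: apply F̃^{φ} (valid when ε = 0 < φ). -/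
def dotF (e : ℕ) (B : Finset ℕ) (res : ℕ) : Finset ℕ := Ftil e B res (phiB e B res)

/-- Apply a chain of Ḟ steps. -/
def chainFold (e : ℕ) : Finset ℕ → List ℕ → Finset ℕ
  | B, [] => B
  | B, i :: rest => chainFold e (dotF e B i) rest

/-- The chain of Ḟ steps is semisimple: at each step ε = 0 before, φ > 0 before,
and φ = 0 afterwards. -/
def validChain (e : ℕ) : Finset ℕ → List ℕ → Prop
  | _, [] => True
  | B, i :: rest =>
      (epsB e B i = 0 ∧ 0 < phiB e B i ∧ phiB e (dotF e B i) i = 0) ∧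
      validChain e (dotF e B i) rest

/-- `B` induces semisimply to `C` (displays with the same number of beads). -/
def InducesSS (e : ℕ) (B C : Finset ℕ) : Prop :=
  ∃ L : List ℕ, validChain e B L ∧ chainFold e B L = C

/-- Re-display a beta-set with `s` additional beads. -/
def shiftBeta (B : Finset ℕ) (s : ℕ) : Finset ℕ :=
  B.image (· + s) ∪ Finset.range s

/-- `B` induces semisimply to the partition displayed by `C` (where `C` may use a
different number of beads). -/
def InducesToPartition (e : ℕ) (B C : Finset ℕ) : Prop :=
  ∃ D : Finset ℕ, InducesSS e B D ∧ shiftBeta D C.card = shiftBeta C D.card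

/-- The block with bead counts `bd` and weight `w` is Rouquier:
for all `i < j < e`, `bd i − bd j ≥ w` or `bd j − bd i ≥ w − 1`. -/
def IsRouquier (e w : ℕ) (bd : ℕ → ℕ) : Prop :=
  ∀ i j, i < j → j < e → bd j + w ≤ bd i ∨ bd i + (w - 1) ≤ bd j

/-- `lam` is e-singular: it has `e` consecutive equal nonzero parts. -/
def ESingular (e : ℕ) (lam : AbacusPartition) : Prop :=
  ∃ i, lam.parts i ≠ 0 ∧ ∀ m < e, lam.parts (i + m) = lam.parts i

/-- `lam` is e-regular. -/
def ERegular (e : ℕ) (lam : AbacusPartition) : Prop := ¬ ESingular e lam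

/-- The induced e-sequence of the display `B`, as a multiset: each bead of
positive weight `w` at position `p` contributes `p, p−e, …, p−(w−1)e`. -/
def inducedSeq (e : ℕ) (B : Finset ℕ) : Multiset ℕ :=
  B.val.bind (fun p => (Multiset.range (beadWeight e B p)).map (fun m => p - m * e))

/-- The product order: `lam ≤_P mu` iff they have the same e-core and e-weight and
`s(mu)_r ≥ s(lam)_r` componentwise for all sufficiently large `r`. -/
def ProdLE (e : ℕ) (lam mu : AbacusPartition) : Prop :=
  (∃ r, lam.len ≤ r ∧ mu.len ≤ r ∧
    coreBeta e (lam.betaSet r) = coreBeta e (mu.betaSet r)) ∧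
  eWeight e lam = eWeight e mu ∧
  ∃ r0, ∀ r, r0 ≤ r →
    List.Forall₂ (· ≤ ·) ((inducedSeq e (lam.betaSet r)).sort (· ≤ ·))
      ((inducedSeq e (mu.betaSet r)).sort (· ≤ ·))

namespace Stmt5Aux

def occB (B : Finset ℕ) : ℕ → Bool := fun p => decide (p ∈ B)
def noccB (B : Finset ℕ) : ℕ → Bool := fun p => decide (p ∉ B)
def poccB (B : Finset ℕ) : ℕ → Bool := fun p => decide (p = 0 ∨ p - 1 ∈ B)

def dBm (B : Finset ℕ) (p : ℕ) : ℤ :=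
  (if p ∈ B then 1 else 0) - (if p = 0 ∨ p - 1 ∈ B then 1 else 0)

def DD (B : Finset ℕ) (L : List ℕ) : ℤ := (L.map (dBm B)).sum

@[simp] lemma DD_nil (B : Finset ℕ) : DD B [] = 0 := rfl

@[simp] lemma DD_cons (B : Finset ℕ) (p : ℕ) (L : List ℕ) :
    DD B (p :: L) = dBm B p + DD B L := by simp [DD]

lemma DD_append (B : Finset ℕ) (L1 L2 : List ℕ) :
    DD B (L1 ++ L2) = DD B L1 + DD B L2 := by simp [DD]

def suffMax (B : Finset ℕ) : List ℕ → ℤ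
  | [] => 0
  | p :: L => max (dBm B p + DD B L) (suffMax B L)

lemma DD_le_suffMax (B : Finset ℕ) (L : List ℕ) : DD B L ≤ suffMax B L := by
  cases L with
  | nil => simp [suffMax]
  | cons p L => simp [suffMax]

lemma suffMax_nonneg (B : Finset ℕ) (L : List ℕ) : 0 ≤ suffMax B L := by
  induction L with
  | nil => simp [suffMax]
  | cons p L ih => simp only [suffMax]; omega

lemma step_len (B : Finset ℕ) (st : List ℕ × List ℕ) (p : ℕ) :
    ((signStep B st p).2.length : ℤ) = max ((st.2.length : ℤ) + dBm B p) 0 := by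
  unfold signStep dBm
  by_cases h1 : p ∈ B <;> by_cases h2 : p = 0 ∨ p - 1 ∈ B
  · simp [h1, h2]
  · simp [h1, h2] <;> omega
  · cases h : st.2 with
    | nil => simp [h1, h2, h]
    | cons a tl => simp [h1, h2, h] <;> omega
  · simp [h1, h2]

lemma foldl_len (B : Finset ℕ) : ∀ (L : List ℕ) (st : List ℕ × List ℕ),
    ((L.foldl (signStep B) st).2.length : ℤ) ≤ max ((st.2.length : ℤ) + DD B L) (suffMax B L) := by
  intro L
  induction L with
  | nil => intro st; simp [suffMax]
  | cons p L ih =>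
      intro st
      have h := ih (signStep B st p)
      have hs := step_len B st p
      have h1 : DD B L ≤ suffMax B L := DD_le_suffMax B L
      simp only [List.foldl_cons, DD_cons, suffMax] at *
      omega

lemma suffMax_split (B : Finset ℕ) : ∀ (L : List ℕ) (c : ℤ), c ≤ suffMax B L →
    ∃ L1 L2, L = L1 ++ L2 ∧ c ≤ DD B L2 := by
  intro L
  induction L with
  | nil => intro c hc; exact ⟨[], [], rfl, by simpa [suffMax] using hc⟩
  | cons p L ih =>
      intro c hc
      simp only [suffMax, le_max_iff] at hc
      rcases hc with hc | hc
      · exact ⟨[], p :: L, rfl, by simpa using hc⟩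
      · obtain ⟨L1, L2, h1, h2⟩ := ih c hc
        exact ⟨p :: L1, L2, by rw [h1]; rfl, h2⟩

lemma DD_le_count (B : Finset ℕ) (L : List ℕ) :
    DD B L ≤ ((L.filter (occB B)).length : ℤ) := by
  induction L with
  | nil => simp
  | cons p L ih =>
      rw [DD_cons, List.filter_cons]
      by_cases h : p ∈ B
      · have hb : occB B p = true := by simp [occB, h]
        rw [if_pos hb]
        have : dBm B p ≤ 1 := by unfold dBm; split <;> split <;> omega
        simp only [List.length_cons]
        push_cast
        omega
      · have hb : ¬ (occB B p = true) := by simp [occB, h]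
        rw [if_neg hb]
        have : dBm B p ≤ 0 := by unfold dBm; split <;> split <;> simp_all <;> omega
        omega

lemma neg_count_le_DD (B : Finset ℕ) (L : List ℕ) :
    -(((L.filter (noccB B)).length : ℤ)) ≤ DD B L := by
  induction L with
  | nil => simp
  | cons p L ih =>
      rw [DD_cons, List.filter_cons]
      by_cases h : p ∈ B
      · have hb : ¬ (noccB B p = true) := by simp [noccB, h]
        rw [if_neg hb]
        have : 0 ≤ dBm B p := by unfold dBm; split <;> split <;> simp_all <;> omega
        omega
      · have hb : noccB B p = true := by simp [noccB, h]
        rw [if_pos hb]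
        have : -1 ≤ dBm B p := by unfold dBm; split <;> split <;> omega
        simp only [List.length_cons]
        push_cast
        omega

lemma DD_eq_counts (B : Finset ℕ) (L : List ℕ) :
    DD B L = ((L.filter (occB B)).length : ℤ) - ((L.filter (poccB B)).length : ℤ) := by
  induction L with
  | nil => simp
  | cons p L ih =>
      rw [DD_cons, List.filter_cons, List.filter_cons]
      by_cases h1 : p ∈ B <;> by_cases h2 : p = 0 ∨ p - 1 ∈ B
      · rw [if_pos (by simp [occB, h1] : occB B p = true),
            if_pos (by simp [poccB, h2] : poccB B p = true)]
        simp only [dBm, if_pos h1, if_pos h2, List.length_cons]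
        push_cast; omega
      · rw [if_pos (by simp [occB, h1] : occB B p = true),
            if_neg (by simp [poccB, h2] : ¬ poccB B p = true)]
        simp only [dBm, if_pos h1, if_neg h2, List.length_cons]
        push_cast; omega
      · rw [if_neg (by simp [occB, h1] : ¬ occB B p = true),
            if_pos (by simp [poccB, h2] : poccB B p = true)]
        simp only [dBm, if_neg h1, if_pos h2, List.length_cons]
        push_cast; omega
      · rw [if_neg (by simp [occB, h1] : ¬ occB B p = true),
            if_neg (by simp [poccB, h2] : ¬ poccB B p = true)]
        simp only [dBm, if_neg h1, if_neg h2]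
        push_cast; omega

lemma pred_mod {e p i : ℕ} (hi : 1 ≤ i) (hie : i < e) (hp : p % e = i) :
    1 ≤ p ∧ (p - 1) % e = i - 1 := by
  have hd := Nat.div_add_mod p e
  have hp1 : 1 ≤ p := by omega
  have h2 : p - 1 = e * (p / e) + (i - 1) := by omega
  rw [h2, Nat.mul_add_mod]
  exact ⟨hp1, Nat.mod_eq_of_lt (by omega)⟩

lemma succ_mod {e q i : ℕ} (hi : 1 ≤ i) (hie : i < e) (hq : q % e = i - 1) :
    (q + 1) % e = i := by
  have hd := Nat.div_add_mod q e
  have h2 : q + 1 = e * (q / e) + i := by omega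
  rw [h2, Nat.mul_add_mod]
  exact Nat.mod_eq_of_lt hie

lemma pred_mod_zero {e p : ℕ} (he : 2 ≤ e) (hp : p % e = 0) (hp0 : p ≠ 0) :
    (p - 1) % e = e - 1 := by
  have hd := Nat.div_add_mod p e
  rcases Nat.eq_zero_or_pos (p / e) with h | h
  · rw [h, Nat.mul_zero] at hd; omega
  · obtain ⟨c, hc⟩ : ∃ c, p / e = c + 1 := ⟨p / e - 1, by omega⟩
    rw [hc, Nat.mul_add, Nat.mul_one] at hd
    have h2 : p - 1 = e * c + (e - 1) := by omega
    rw [h2, Nat.mul_add_mod]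
    exact Nat.mod_eq_of_lt (by omega)

lemma succ_mod_zero {e q : ℕ} (he : 2 ≤ e) (hq : q % e = e - 1) :
    (q + 1) % e = 0 := by
  have hd := Nat.div_add_mod q e
  have h2 : q + 1 = e * (q / e + 1) := by
    rw [Nat.mul_add, Nat.mul_one]; omega
  rw [h2]
  exact Nat.mul_mod_right e _

end Stmt5Aux

/-- if a block of weight `w ∈ {3,4}` forms a `[w:k]`-pair via the
residue carried by runner `i`, then any exceptional partition `σ` in the block
(`ε ≥ k+1` on runner `i`) has `|σ(i)| ≥ k+1`, i.e. the beads on runner `i`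
carry total e-weight at least `k+1`. -/
theorem stmt5 (e : ℕ) (he : 2 ≤ e) (w : ℕ) (hw34 : w = 3 ∨ w = 4)
    (bd : ℕ → ℕ) (k : ℕ) (hk : 1 ≤ k) (i : ℕ) (hi : i < e)
    (hpair : (0 < i → bd i = bd (i - 1) + k) ∧ (i = 0 → bd 0 = bd (e - 1) + k + 1))
    (r : ℕ) (hr : r = (Finset.range e).sum bd)
    (sig : AbacusPartition) (hσ : inBlock e bd w sig)
    (hexc : k + 1 ≤ epsB e (sig.betaSet r) i) :
    k + 1 ≤ runnerWeight e (sig.betaSet r) i := by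
  subst hr
  obtain ⟨-, hcnt, -⟩ := hσ
  set B := sig.betaSet ((Finset.range e).sum bd) with hB
  set L := posList e B i with hLdef
  have hmemL : ∀ p, p ∈ L ↔ p < B.sup id + e + 2 ∧ p % e = i := by
    intro p
    rw [hLdef]
    unfold posList
    simp [List.mem_filter, List.mem_range]
  have hBlt : ∀ p ∈ B, p < B.sup id + e + 2 := by
    intro p hp
    have := Finset.le_sup (f := id) hp
    simp only [id] at this
    omega
  have hLnodup : L.Nodup := by
    rw [hLdef]; unfold posList; exact (List.nodup_range).filter _
  have hC1 : (L.filter (Stmt5Aux.occB B)).length = bd i := by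
    have hnd : (L.filter (Stmt5Aux.occB B)).Nodup := hLnodup.filter _
    have hfs : (L.filter (Stmt5Aux.occB B)).toFinset = B.filter (fun p => p % e = i) := by
      ext p
      simp only [List.mem_toFinset, List.mem_filter, Finset.mem_filter, Stmt5Aux.occB,
        decide_eq_true_eq, hmemL]
      constructor
      · rintro ⟨⟨-, h2⟩, h3⟩; exact ⟨h3, h2⟩
      · rintro ⟨h1, h2⟩; exact ⟨⟨hBlt p h1, h2⟩, h1⟩
    have hfc := List.toFinset_card_of_nodup hnd
    rw [hfs] at hfc
    have hrc := hcnt i hi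
    unfold runnerCount at hrc
    omega
  have hC2 : (L.filter (Stmt5Aux.poccB B)).length + k = bd i := by
    have hnd : (L.filter (Stmt5Aux.poccB B)).Nodup := hLnodup.filter _
    have hcard := List.toFinset_card_of_nodup hnd
    rcases Nat.eq_zero_or_pos i with hi0 | hipos
    · subst hi0
      have hfs : (L.filter (Stmt5Aux.poccB B)).toFinset
          = insert 0 ((B.filter (fun q => q % e = e - 1)).image (· + 1)) := by
        ext p
        simp only [List.mem_toFinset, List.mem_filter, Stmt5Aux.poccB, decide_eq_true_eq,
          Finset.mem_insert, Finset.mem_image, Finset.mem_filter, hmemL]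
        constructor
        · rintro ⟨⟨hpN, hpe⟩, hpred⟩
          rcases hpred with h0 | hp1
          · exact Or.inl h0
          · by_cases hp0 : p = 0
            · exact Or.inl hp0
            · exact Or.inr ⟨p - 1, ⟨hp1, Stmt5Aux.pred_mod_zero he hpe hp0⟩, by omega⟩
        · rintro (rfl | ⟨q, ⟨hqB, hqe⟩, rfl⟩)
          · exact ⟨⟨by omega, Nat.zero_mod e⟩, Or.inl rfl⟩
          · refine ⟨⟨by have h := Finset.le_sup (f := id) hqB; simp only [id] at h; omega, Stmt5Aux.succ_mod_zero he hqe⟩, Or.inr ?_⟩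
            simpa using hqB
      have hni : 0 ∉ (B.filter (fun q => q % e = e - 1)).image (· + 1) := by simp
      rw [hfs, Finset.card_insert_of_notMem hni,
        Finset.card_image_of_injective _ (add_left_injective 1)] at hcard
      have hrc := hcnt (e - 1) (by omega)
      unfold runnerCount at hrc
      have hp2 := hpair.2 rfl
      omega
    · have hfs : (L.filter (Stmt5Aux.poccB B)).toFinset
          = (B.filter (fun q => q % e = i - 1)).image (· + 1) := by
        ext p
        simp only [List.mem_toFinset, List.mem_filter, Stmt5Aux.poccB, decide_eq_true_eq,
          Finset.mem_image, Finset.mem_filter, hmemL]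
        constructor
        · rintro ⟨⟨hpN, hpe⟩, hpred⟩
          have hp0 : p ≠ 0 := by
            intro h; rw [h, Nat.zero_mod] at hpe; omega
          rcases hpred with h0 | hp1
          · exact (hp0 h0).elim
          · obtain ⟨hp1le, hmod⟩ := Stmt5Aux.pred_mod hipos hi hpe
            exact ⟨p - 1, ⟨hp1, hmod⟩, by omega⟩
        · rintro ⟨q, ⟨hqB, hqe⟩, rfl⟩
          refine ⟨⟨by have h := Finset.le_sup (f := id) hqB; simp only [id] at h; omega, Stmt5Aux.succ_mod hipos hi hqe⟩, Or.inr ?_⟩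
          simpa using hqB
      rw [hfs, Finset.card_image_of_injective _ (add_left_injective 1)] at hcard
      have hrc := hcnt (i - 1) (by omega)
      unfold runnerCount at hrc
      have hp1 := hpair.1 hipos
      omega
  have hDD : Stmt5Aux.DD B L = (k : ℤ) := by
    rw [Stmt5Aux.DD_eq_counts, hC1]
    have : ((L.filter (Stmt5Aux.poccB B)).length : ℤ) + k = bd i := by exact_mod_cast hC2
    omega
  have heps : (k : ℤ) + 1 ≤ ((L.foldl (signStep B) ([], [])).2.length : ℤ) := by
    unfold epsB normalList signState at hexc
    rw [← hLdef] at hexc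
    exact_mod_cast hexc
  have hle := Stmt5Aux.foldl_len B L ([], [])
  simp only [List.length_nil, Nat.cast_zero, zero_add] at hle
  rw [hDD] at hle
  have hsm : (k : ℤ) + 1 ≤ Stmt5Aux.suffMax B L := by
    rcases le_max_iff.mp (le_trans heps hle) with h | h
    · omega
    · exact h
  obtain ⟨L1, L2, hsplit, hDD2⟩ := Stmt5Aux.suffMax_split B L ((k : ℤ) + 1) hsm
  have hA : k + 1 ≤ (L2.filter (Stmt5Aux.occB B)).length := by
    have := Stmt5Aux.DD_le_count B L2
    omega
  have hDD1 : Stmt5Aux.DD B L1 ≤ -1 := by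
    have h := hDD
    rw [hsplit, Stmt5Aux.DD_append] at h
    omega
  have hgap : ∃ q ∈ L1, q ∉ B := by
    have h := Stmt5Aux.neg_count_le_DD B L1
    have hpos : (L1.filter (Stmt5Aux.noccB B)) ≠ [] := by
      intro hnil
      rw [hnil] at h
      simp at h
      omega
    obtain ⟨q, hq⟩ := List.exists_mem_of_ne_nil _ hpos
    rw [List.mem_filter] at hq
    exact ⟨q, hq.1, by simpa [Stmt5Aux.noccB] using hq.2⟩
  have hpw : L.Pairwise (· < ·) := by
    rw [hLdef]; unfold posList
    exact List.Pairwise.sublist (List.filter_sublist) (List.pairwise_lt_range)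
  rw [hsplit] at hpw
  have hlt : ∀ q ∈ L1, ∀ p ∈ L2, q < p := fun q hq p hp =>
    (List.pairwise_append.mp hpw).2.2 q hq p hp
  obtain ⟨q, hqL1, hqnB⟩ := hgap
  have hqL : q ∈ L := by rw [hsplit]; exact List.mem_append_left _ hqL1
  have hqe : q % e = i := ((hmemL q).mp hqL).2
  have hndL2 : (L2.filter (Stmt5Aux.occB B)).Nodup := by
    have hnd : (L1 ++ L2).Nodup := hsplit ▸ hLnodup
    exact hnd.of_append_right.filter _
  have hcardS2 : (L2.filter (Stmt5Aux.occB B)).toFinset.card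
      = (L2.filter (Stmt5Aux.occB B)).length := List.toFinset_card_of_nodup hndL2
  have hsub : (L2.filter (Stmt5Aux.occB B)).toFinset ⊆ B.filter (fun p => p % e = i) := by
    intro p hp
    rw [List.mem_toFinset, List.mem_filter] at hp
    obtain ⟨hpL2, hpB⟩ := hp
    have hpB' : p ∈ B := by simpa [Stmt5Aux.occB] using hpB
    have hpL : p ∈ L := by rw [hsplit]; exact List.mem_append_right _ hpL2
    exact Finset.mem_filter.mpr ⟨hpB', ((hmemL p).mp hpL).2⟩
  have hbw : ∀ p ∈ (L2.filter (Stmt5Aux.occB B)).toFinset, 1 ≤ beadWeight e B p := by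
    intro p hp
    rw [List.mem_toFinset, List.mem_filter] at hp
    have hpL2 := hp.1
    have hqp : q < p := hlt q hqL1 p hpL2
    have hpL : p ∈ L := by rw [hsplit]; exact List.mem_append_right _ hpL2
    have hpe : p % e = i := ((hmemL p).mp hpL).2
    unfold beadWeight
    refine Finset.card_pos.mpr ⟨q, Finset.mem_filter.mpr ⟨Finset.mem_range.mpr hqp, ?_, hqnB⟩⟩
    rw [hqe, hpe]
  calc k + 1 ≤ (L2.filter (Stmt5Aux.occB B)).length := hA
    _ = (L2.filter (Stmt5Aux.occB B)).toFinset.card := hcardS2.symm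
    _ = (L2.filter (Stmt5Aux.occB B)).toFinset.sum (fun _ => 1) := by
        rw [Finset.sum_const, smul_eq_mul, mul_one]
    _ ≤ (L2.filter (Stmt5Aux.occB B)).toFinset.sum (beadWeight e B) := Finset.sum_le_sum hbw
    _ ≤ (B.filter (fun p => p % e = i)).sum (beadWeight e B) :=
        Finset.sum_le_sum_of_subset hsub
    _ = runnerWeight e B i := rfl
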